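/- (Value Lemma, discrete-time form for grit.) The grit satisfies the Bellman optimality recursion: Γ 0 s = (if s ∈ B then 1 else 0) for every state s, and for every n : ℕ and every state s, Γ (n+1) s = (if s ∈ B then 1 else (the minimum over actions a ∈ A of ∑ s', (p s a s').toReal * Γ n s')). In particular, s ↦ −Γ n s is the optimal n-step value function of the MDP whose reward is −1 upon entering B and 0 otherwise. -/
import Mathlib


open scoped BigOperators

/-- Shift of a policy: `(shift π) k = π (k+1)`. -/
def shiftPolicy {S A : Type*} (π : ℕ → S → A) : ℕ → S → A := fun k => π (k + 1)

/-- Hitting probability of `B` within `n` steps from state `s` under policy `π`: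
`h π 0 s = (if s ∈ B then 1 else 0)` and
`h π (n+1) s = (if s ∈ B then 1 else ∑ s', (p s (π 0 s) s').toReal * h (shift π) n s')`. -/
noncomputable def hitProb {S A : Type*} [Fintype S]
    (p : S → A → PMF S) (B : Set S) [DecidablePred (· ∈ B)] :
    (ℕ → S → A) → ℕ → S → ℝ
  | _, 0, s => if s ∈ B then 1 else 0
  | π, n + 1, s =>
      if s ∈ B then 1
      else ∑ s', (p s (π 0 s) s').toReal * hitProb p B (shiftPolicy π) n s'

/-- Grit: the infimum over all policies of the hitting probability of `B`. -/
noncomputable def grit {S A : Type*} [Fintype S]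
    (p : S → A → PMF S) (B : Set S) [DecidablePred (· ∈ B)] (n : ℕ) (s : S) : ℝ :=
  ⨅ π : ℕ → S → A, hitProb p B π n s

/-- Reachability: the supremum over all policies of the hitting probability of `B`. -/
noncomputable def reach {S A : Type*} [Fintype S]
    (p : S → A → PMF S) (B : Set S) [DecidablePred (· ∈ B)] (n : ℕ) (s : S) : ℝ :=
  ⨆ π : ℕ → S → A, hitProb p B π n s

section aux
set_option linter.unusedSectionVars false
variable {S A : Type*} [Fintype S] [Nonempty S] [Fintype A] [Nonempty A]
    (p : S → A → PMF S) (B : Set S) [DecidablePred (· ∈ B)]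

lemma hitProb_nonneg (π : ℕ → S → A) (n : ℕ) (s : S) : 0 ≤ hitProb p B π n s := by
  induction n generalizing π s with
  | zero => simp [hitProb]; positivity
  | succ n ih =>
      simp only [hitProb]
      split
      · norm_num
      · exact Finset.sum_nonneg fun s' _ => mul_nonneg ENNReal.toReal_nonneg (ih _ _)

lemma grit_bdd (n : ℕ) (s : S) :
    BddBelow (Set.range fun π : ℕ → S → A => hitProb p B π n s) :=
  ⟨0, fun _ ⟨π, hπ⟩ => hπ ▸ hitProb_nonneg p B π n s⟩

lemma grit_le (π : ℕ → S → A) (n : ℕ) (s : S) : grit p B n s ≤ hitProb p B π n s :=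
  ciInf_le (grit_bdd p B n s) π

lemma bellman_step (n : ℕ) (πs : ℕ → S → A)
    (hπs : ∀ s, hitProb p B πs n s = grit p B n s) :
    (∀ s : S, grit p B (n + 1) s =
      if s ∈ B then 1
      else ⨅ a : A, ∑ s', (p s a s').toReal * grit p B n s') ∧
    (∃ π' : ℕ → S → A, ∀ s, hitProb p B π' (n + 1) s = grit p B (n + 1) s) := by
  set f : S → A → ℝ := fun s a => ∑ s', (p s a s').toReal * grit p B n s' with hf
  have hamin : ∀ s : S, ∃ a : A, ∀ b : A, f s a ≤ f s b := fun s =>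
    Finite.exists_min (f s)
  choose astar hastar using hamin
  have hinf : ∀ s : S, (⨅ a : A, f s a) = f s (astar s) := by
    intro s
    refine le_antisymm (ciInf_le (Set.Finite.bddBelow (Set.finite_range _)) _)
      (le_ciInf (hastar s))
  set π' : ℕ → S → A := fun k => match k with | 0 => astar | k + 1 => πs k with hπ'
  have hshift : shiftPolicy π' = πs := rfl
  have hlow : ∀ (π : ℕ → S → A) (s : S),
      (if s ∈ B then 1 else ⨅ a : A, f s a) ≤ hitProb p B π (n + 1) s := by
    intro π s
    simp only [hitProb]
    split
    · exact le_refl 1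
    · calc (⨅ a : A, f s a) ≤ f s (π 0 s) :=
            ciInf_le (Set.Finite.bddBelow (Set.finite_range _)) _
        _ ≤ ∑ s', (p s (π 0 s) s').toReal * hitProb p B (shiftPolicy π) n s' :=
            Finset.sum_le_sum fun s' _ =>
              mul_le_mul_of_nonneg_left (grit_le p B _ n s') ENNReal.toReal_nonneg
  have hπ'val : ∀ s : S, hitProb p B π' (n + 1) s =
      if s ∈ B then 1 else ⨅ a : A, f s a := by
    intro s
    simp only [hitProb, hshift]
    split
    · rfl
    · rw [hinf s]
      exact Finset.sum_congr rfl fun s' _ => by rw [hπs s']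
  have hrec : ∀ s : S, grit p B (n + 1) s =
      if s ∈ B then 1 else ⨅ a : A, f s a := by
    intro s
    refine le_antisymm ?_ (le_ciInf fun π => hlow π s)
    exact (hπ'val s) ▸ grit_le p B π' (n + 1) s
  exact ⟨hrec, ⟨π', fun s => by rw [hπ'val s, hrec s]⟩⟩

end aux

/-- **Value Lemma, discrete-time form for grit.**  The grit satisfies the Bellman optimality
recursion: `Γ 0 s = (if s ∈ B then 1 else 0)` and
`Γ (n+1) s = (if s ∈ B then 1 else ⨅ a, ∑ s', (p s a s').toReal * Γ n s')`, so that
`s ↦ -Γ n s` is the optimal `n`-step value function of the MDP with reward `-1` upon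
entering `B` and `0` otherwise. -/
theorem grit_bellman {S A : Type*} [Fintype S] [Nonempty S] [Fintype A] [Nonempty A]
    (p : S → A → PMF S) (B : Set S) [DecidablePred (· ∈ B)] :
    (∀ s : S, grit p B 0 s = if s ∈ B then 1 else 0) ∧
    (∀ (n : ℕ) (s : S), grit p B (n + 1) s =
      if s ∈ B then 1
      else ⨅ a : A, ∑ s', (p s a s').toReal * grit p B n s') := by
  have h0 : ∀ s : S, grit p B 0 s = if s ∈ B then 1 else 0 := fun s => ciInf_const
  have main : ∀ n : ℕ, ∃ π : ℕ → S → A, ∀ s, hitProb p B π n s = grit p B n s := by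
    intro n
    induction n with
    | zero => exact ⟨Classical.arbitrary _, fun s => (h0 s) ▸ rfl⟩
    | succ n ih =>
        obtain ⟨πs, hπs⟩ := ih
        exact (bellman_step p B n πs hπs).2
  refine ⟨h0, fun n s => ?_⟩
  obtain ⟨πs, hπs⟩ := main n
  exact (bellman_step p B n πs hπs).1 s
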